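/- Let G be a metric ATSP instance on vertex set V and let M be obtained from G by a sequence of edge contractions, where contracting (u,v) merges u,v into a single vertex uv with c(w,uv) = min(c(w,u), c(w,v)) and c(uv,w) = min(c(u,w), c(v,w)) for all other w. Then the minimum tour cost of M is at most the minimum tour cost of G. -/

import Mathlib

/-- Cost of traversing a list cyclically (wrapping around at the end). -/
def cycleCost {V : Type*} (c : V → V → ℝ) (l : List V) : ℝ :=
  ∑ i : Fin l.length, c (l.get i) (l.get ⟨((i : ℕ) + 1) % l.length, Nat.mod_lt _ i.pos⟩)

/-- The set of costs of Hamiltonian cycles (tours) on a finset `S`. -/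
def tourCosts {V : Type*} [DecidableEq V] (c : V → V → ℝ) (S : Finset V) : Set ℝ :=
  {x | ∃ l : List V, l.Nodup ∧ l.toFinset = S ∧ cycleCost c l = x}

/-- path cost: sum of consecutive costs. -/
def pathCost {V : Type*} (c : V → V → ℝ) : List V → ℝ
  | a :: b :: t => c a b + pathCost c (b :: t)
  | _ => 0

lemma pathCost_cons_cons {V : Type*} (c : V → V → ℝ) (a b : V) (t : List V) :
    pathCost c (a :: b :: t) = c a b + pathCost c (b :: t) := rfl

lemma pathCost_sum {V : Type*} (c : V → V → ℝ) :
    ∀ (t : List V) (a : V), pathCost c (a :: t) =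
      ∑ i : Fin t.length, c ((a :: t).get ⟨i, Nat.lt_succ_of_lt i.isLt⟩)
        ((a :: t).get ⟨(i : ℕ) + 1, Nat.succ_lt_succ i.isLt⟩)
  | [], a => by simp [pathCost]
  | b :: s, a => by
    rw [pathCost_cons_cons, pathCost_sum c s b]
    simp only [List.length_cons]
    rw [Fin.sum_univ_succ]
    simp [List.get]

lemma cycleCost_eq_path {V : Type*} (c : V → V → ℝ) (a : V) (t : List V) :
    cycleCost c (a :: t) =
      pathCost c (a :: t) + c ((a :: t).getLast (List.cons_ne_nil a t)) a := by
  unfold cycleCost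
  simp only [List.length_cons]
  rw [Fin.sum_univ_castSucc, pathCost_sum]
  congr 1
  · apply Finset.sum_congr rfl
    intro i _
    simp [Nat.mod_eq_of_lt (Nat.succ_lt_succ i.isLt)]
  · have h0 : ((Fin.last t.length : ℕ) + 1) % (t.length + 1) = 0 := by
      simp [Fin.last]
    rw [List.getLast_eq_getElem]
    simp [h0, List.get]

lemma getLast_dedup_map {V W : Type*} [DecidableEq W] (f : V → W) :
    ∀ (t : List V) (a : V) (h1 : ((a :: t).map f).dedup ≠ []),
      (((a :: t).map f).dedup).getLast h1 = f ((a :: t).getLast (List.cons_ne_nil a t))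
  | [], a, h1 => by simp
  | b :: s, a, h1 => by
    have hne : ((b :: s).map f).dedup ≠ [] := by
      simp [List.dedup_eq_nil]
    by_cases hm : f a ∈ (b :: s).map f
    · have hd : ((a :: b :: s).map f).dedup = ((b :: s).map f).dedup := by
        rw [List.map_cons, List.dedup_cons_of_mem hm]
      rw [List.getLast_congr _ hne hd, getLast_dedup_map f s b hne,
        List.getLast_cons (List.cons_ne_nil b s)]
    · have hd : ((a :: b :: s).map f).dedup = f a :: ((b :: s).map f).dedup := by
        rw [List.map_cons, List.dedup_cons_of_notMem hm]
      rw [List.getLast_congr _ (List.cons_ne_nil _ _) hd, List.getLast_cons hne, getLast_dedup_map f s b hne,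
        List.getLast_cons (List.cons_ne_nil b s)]

lemma pathP {V W : Type*} [DecidableEq W] (c : V → V → ℝ) (d : W → W → ℝ) (f : V → W)
    (htri : ∀ u v w, c u w ≤ c u v + c v w)
    (hdc : ∀ u v, d (f u) (f v) ≤ c u v) :
    ∀ (t : List V) (a u : V),
      pathCost d (f u :: ((a :: t).map f).dedup) ≤ c u a + pathCost c (a :: t)
  | [], a, u => by
    simp [pathCost, hdc u a]
  | b :: s, a, u => by
    by_cases hm : f a ∈ (b :: s).map f
    · have hd : ((a :: b :: s).map f).dedup = ((b :: s).map f).dedup := by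
        rw [List.map_cons, List.dedup_cons_of_mem hm]
      rw [hd, pathCost_cons_cons]
      have h1 := pathP c d f htri hdc s b u
      have h2 := htri u a b
      linarith
    · have hd : ((a :: b :: s).map f).dedup = f a :: ((b :: s).map f).dedup := by
        rw [List.map_cons, List.dedup_cons_of_notMem hm]
      rw [hd, pathCost_cons_cons, pathCost_cons_cons c a b s]
      have h1 := pathP c d f htri hdc s b a
      have h2 := hdc u a
      linarith

/-- contracting a metric ATSP instance along a partition
(with min cross-pair costs) does not increase the minimum tour cost. -/
theorem stmt_3 {V : Type*} [Fintype V] [DecidableEq V] (c : V → V → ℝ)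
    (hnn : ∀ u v : V, 0 ≤ c u v)
    (htri : ∀ u v w : V, c u w ≤ c u v + c v w)
    (m : ℕ) (S : Fin m → Finset V)
    (hdisj : ∀ i j, i ≠ j → Disjoint (S i) (S j))
    (hne : ∀ i, (S i).Nonempty)
    (hcover : ∀ v : V, ∃ i, v ∈ S i)
    (d : Fin m → Fin m → ℝ)
    (hd : ∀ i j, d i j = sInf {x | ∃ u ∈ S i, ∃ v ∈ S j, c u v = x}) :
    sInf (tourCosts d Finset.univ) ≤ sInf (tourCosts c Finset.univ) := by
  classical
  choose f hf using hcover
  have hfd : ∀ u v, d (f u) (f v) ≤ c u v := by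
    intro u v
    rw [hd]
    refine csInf_le ⟨0, ?_⟩ ⟨u, hf u, v, hf v, rfl⟩
    rintro x ⟨p, -, q, -, rfl⟩
    exact hnn p q
  have hd0 : ∀ i j, 0 ≤ d i j := by
    intro i j
    rw [hd]
    obtain ⟨p, hp⟩ := hne i
    obtain ⟨q, hq⟩ := hne j
    refine le_csInf ⟨c p q, p, hp, q, hq, rfl⟩ ?_
    rintro x ⟨u, -, v, -, rfl⟩
    exact hnn u v
  have hfinj : ∀ (v : V) (i : Fin m), v ∈ S i → f v = i := by
    intro v i hv
    by_contra h
    exact (Finset.disjoint_left.1 (hdisj _ _ h) (hf v)) hv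
  have hCne : (tourCosts c Finset.univ).Nonempty :=
    ⟨_, Finset.univ.toList, Finset.nodup_toList _, by simp, rfl⟩
  have hbdd : BddBelow (tourCosts d Finset.univ) := by
    refine ⟨0, ?_⟩
    rintro y ⟨L', -, -, rfl⟩
    exact Finset.sum_nonneg fun i _ => hd0 _ _
  refine le_csInf hCne ?_
  rintro x ⟨l, hlnd, hlfin, rfl⟩
  match l with
  | [] =>
    have hVempty : IsEmpty V := by
      rw [← Finset.univ_eq_empty_iff, ← hlfin]
      rfl
    have hm0 : IsEmpty (Fin m) := by
      refine ⟨fun i => ?_⟩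
      obtain ⟨v, -⟩ := hne i
      exact hVempty.false v
    have h0 : (0 : ℝ) ∈ tourCosts d Finset.univ := by
      refine ⟨[], List.nodup_nil, by simp [Finset.univ_eq_empty], ?_⟩
      simp [cycleCost]
    have : cycleCost c [] = 0 := by simp [cycleCost]
    rw [this]
    exact csInf_le hbdd h0
  | a :: t =>
    set L : List (Fin m) := ((a :: t).map f).dedup with hL
    have hLne : L ≠ [] := by
      rw [hL, Ne, List.dedup_eq_nil]
      simp
    obtain ⟨b, M, hbM⟩ := List.exists_cons_of_ne_nil hLne
    have hmem : cycleCost d L ∈ tourCosts d Finset.univ := by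
      refine ⟨L, List.nodup_dedup _, ?_, rfl⟩
      ext i
      simp only [hL, List.mem_toFinset, List.mem_dedup, List.mem_map, Finset.mem_univ,
        iff_true]
      obtain ⟨v, hv⟩ := hne i
      refine ⟨v, ?_, hfinj v i hv⟩
      rw [← List.mem_toFinset, hlfin]
      exact Finset.mem_univ v
    refine le_trans (csInf_le hbdd hmem) ?_
    -- cost comparison
    have hgl : L.getLast hLne = f ((a :: t).getLast (List.cons_ne_nil a t)) :=
      getLast_dedup_map f t a hLne
    have hgl2 : (b :: M).getLast (List.cons_ne_nil b M)
        = f ((a :: t).getLast (List.cons_ne_nil a t)) :=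
      (List.getLast_congr _ _ hbM).symm.trans hgl
    rw [hbM, cycleCost_eq_path, cycleCost_eq_path, hgl2]
    have key := pathP c d f htri hfd t a ((a :: t).getLast (List.cons_ne_nil a t))
    rw [← hL, hbM, pathCost_cons_cons] at key
    linarith
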